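/- Let G = (S, 𝓕) be an arbitrary greedoid with set of bases 𝓑 and let w : 𝓕 → ℝ be an objective function satisfying: whenever A ⊆ B, A ∈ 𝓕, A ∪ {x} ∈ 𝓕, B ∈ 𝓑, x ∈ S \ B and w(A ∪ {x}) ≥ w(A ∪ {u}) for every u ∈ Γ(A), there exists y ∈ B \ A such that (B \ {y}) ∪ {x} ∈ 𝓑 and w((B \ {y}) ∪ {x}) ≥ w(B). Then every greedy base for maximizing w is a base of maximum w-value among all bases. -/

import Mathlib

open Finset

variable {α : Type*} [DecidableEq α] [Fintype α]

/-- `X` is subfeasible: contained in some feasible set. -/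
def Subfeasible (F : Set (Finset α)) (X : Finset α) : Prop :=
  ∃ Y ∈ F, X ⊆ Y

/-- Greedoid axioms: `∅` is feasible, and the exchange property. -/
def IsGreedoid (F : Set (Finset α)) : Prop :=
  (∅ : Finset α) ∈ F ∧
    ∀ X ∈ F, ∀ Y ∈ F, X.card < Y.card → ∃ y ∈ Y, y ∉ X ∧ insert y X ∈ F

/-- Local union property. -/
def LocalUnion (F : Set (Finset α)) : Prop :=
  ∀ A ∈ F, ∀ B ∈ F, Subfeasible F (A ∪ B) → A ∪ B ∈ F

/-- Local intersection property. -/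
def LocalInter (F : Set (Finset α)) : Prop :=
  ∀ A ∈ F, ∀ B ∈ F, Subfeasible F (A ∪ B) → A ∩ B ∈ F

/-- Local forest property. -/
def LocalForest (F : Set (Finset α)) : Prop :=
  ∀ A ∈ F, ∀ x y z : α,
    insert x A ∈ F → insert y A ∈ F → insert x (insert y A) ∈ F →
      insert z (insert x (insert y A)) ∈ F →
      insert z (insert x A) ∈ F ∨ insert z (insert y A) ∈ F

/-- The rank function of a greedoid: max cardinality of a feasible subset. -/
noncomputable def grank (F : Set (Finset α)) (A : Finset α) : ℕ :=
  sSup {n : ℕ | ∃ X ∈ F, X ⊆ A ∧ X.card = n}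

/-- A base: a feasible set of maximum size. -/
def IsBase (F : Set (Finset α)) (B : Finset α) : Prop :=
  B ∈ F ∧ ∀ C ∈ F, C.card ≤ B.card

/-- The set of continuations of a feasible set `A`. -/
def Gamma (F : Set (Finset α)) (A : Finset α) : Set α :=
  {x | x ∉ A ∧ insert x A ∈ F}

/-- `P` is the `x`-path in `A`: the unique inclusion-minimal feasible subset
of `A` containing `x`. -/
def IsPathIn (F : Set (Finset α)) (A : Finset α) (x : α) (P : Finset α) : Prop :=
  P ∈ F ∧ P ⊆ A ∧ x ∈ P ∧ ∀ Q ∈ F, Q ⊆ A → x ∈ Q → P ⊆ Q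

/-- `P` is a path. -/
def IsPath (F : Set (Finset α)) (P : Finset α) : Prop :=
  ∃ A ∈ F, ∃ x ∈ A, IsPathIn F A x P

/-- `l` is a feasible ordering (of the set of its elements): every prefix is feasible. -/
def FeasibleOrdering (F : Set (Finset α)) (l : List α) : Prop :=
  l.Nodup ∧ ∀ i : ℕ, (l.take i).toFinset ∈ F

/-- `B` is a greedy base for maximizing `w`. -/
def GreedyMaxBase (F : Set (Finset α)) (w : Finset α → ℝ) (B : Finset α) : Prop :=
  IsBase F B ∧ ∃ l : List α, FeasibleOrdering F l ∧ l.toFinset = B ∧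
    ∀ (i : ℕ) (hi : i < l.length), ∀ y ∈ Gamma F (l.take i).toFinset,
      w (insert y (l.take i).toFinset) ≤ w (insert (l.get ⟨i, hi⟩) (l.take i).toFinset)

/-- `B` is a greedy base for minimizing `w`. -/
def GreedyMinBase (F : Set (Finset α)) (w : Finset α → ℝ) (B : Finset α) : Prop :=
  IsBase F B ∧ ∃ l : List α, FeasibleOrdering F l ∧ l.toFinset = B ∧
    ∀ (i : ℕ) (hi : i < l.length), ∀ y ∈ Gamma F (l.take i).toFinset,
      w (insert (l.get ⟨i, hi⟩) (l.take i).toFinset) ≤ w (insert y (l.take i).toFinset)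

/-- The shadow vector of a feasible set `B`: `sh_B(x) = |B| - r(B \ {x})`. -/
noncomputable def shVec (F : Set (Finset α)) (B : Finset α) : α → ℝ :=
  fun x => (B.card : ℝ) - (grank F (B.erase x) : ℝ)

/-- Sufficient condition for the optimality of the greedy algorithm on an
arbitrary greedoid. -/
theorem statement14 (F : Set (Finset α)) (hG : IsGreedoid F) (w : Finset α → ℝ)
    (hprop : ∀ (A B : Finset α) (x : α),
      A ∈ F → insert x A ∈ F → IsBase F B → A ⊆ B → x ∉ B →
      (∀ u ∈ Gamma F A, w (insert u A) ≤ w (insert x A)) →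
      ∃ y ∈ B, y ∉ A ∧ IsBase F (insert x (B.erase y)) ∧ w B ≤ w (insert x (B.erase y)))
    (Bg : Finset α) (hBg : GreedyMaxBase F w Bg) :
    ∀ B : Finset α, IsBase F B → w B ≤ w Bg := by
  intro B hB
  obtain ⟨hBgbase, l, ⟨hnd, hfeas⟩, hl, hgreedy⟩ := hBg
  have key : ∀ i : ℕ, ∃ B', IsBase F B' ∧ (l.take i).toFinset ⊆ B' ∧ w B ≤ w B' := by
    intro i
    induction i with
    | zero => exact ⟨B, hB, by simp, le_refl _⟩
    | succ i ih =>
      obtain ⟨B', hB', hsub, hw⟩ := ih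
      by_cases hi : i < l.length
      · have htake : (l.take (i+1)).toFinset
            = insert (l.get ⟨i, hi⟩) (l.take i).toFinset := by
          have h2 : l.take (i+1) = l.take i ++ [l.get ⟨i, hi⟩] := by
            rw [List.take_succ, List.getElem?_eq_getElem hi]; simp
          rw [h2, List.toFinset_append]
          ext a; simp [or_comm]
        set x := l.get ⟨i, hi⟩ with hxdef
        have hndtake : (l.take (i+1)).Nodup := hnd.sublist (List.take_sublist _ _)
        have hxA : x ∉ (l.take i).toFinset := by
          rw [List.take_succ, List.getElem?_eq_getElem hi] at hndtake
          simp only [List.nodup_append, Option.toList_some] at hndtake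
          intro hmem
          exact hndtake.2.2 x (List.mem_toFinset.mp hmem) x (by simp [hxdef]) rfl
        have hins : insert x (l.take i).toFinset ∈ F := by
          rw [← htake]; exact hfeas (i+1)
        by_cases hxB : x ∈ B'
        · exact ⟨B', hB', by rw [htake]; exact Finset.insert_subset hxB hsub, hw⟩
        · obtain ⟨y, hyB, hyA, hbase, hwle⟩ :=
            hprop _ B' x (hfeas i) hins hB' hsub hxB (hgreedy i hi)
          refine ⟨insert x (B'.erase y), hbase, ?_, le_trans hw hwle⟩
          rw [htake]
          exact Finset.insert_subset_insert _
            (Finset.subset_erase.mpr ⟨hsub, hyA⟩)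
      · have heq : l.take (i+1) = l.take i := by
          rw [List.take_of_length_le (by omega), List.take_of_length_le (by omega)]
        exact ⟨B', hB', by rw [heq]; exact hsub, hw⟩
  obtain ⟨B', hB', hsub, hw⟩ := key l.length
  rw [List.take_length, hl] at hsub
  have : Bg = B' := Finset.eq_of_subset_of_card_le hsub (hBgbase.2 B' hB'.1)
  rw [this]; exact hw
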